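/- Let v > 2 be an integer. If there exist a perfect matching I of the complete graph K_v and a partition of the edges of K_v that are not in I into 5-star factors of K_v, then v ≡ 12 (mod 30). -/

import Mathlib

open Finset

/-- A 5-star `K_{1,5}`: one center joined by edges to 5 leaves. -/
structure Star5 (V : Type*) where
  center : V
  leaves : Finset V
  card_leaves : leaves.card = 5
  center_not_leaf : center ∉ leaves

namespace Star5
variable {V : Type*} [DecidableEq V]

/-- The vertex set of a 5-star. -/
def verts (s : Star5 V) : Finset V := insert s.center s.leaves

/-- The edge set of a 5-star. -/
def edges (s : Star5 V) : Finset (Sym2 V) := s.leaves.image (fun l => s(s.center, l))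

end Star5

/-- A 5-star factor of the complete graph on `V`: pairwise vertex-disjoint 5-stars
covering every vertex. -/
def IsStar5Factor {V : Type*} [DecidableEq V] [Fintype V] (F : Finset (Star5 V)) : Prop :=
  (∀ s ∈ F, ∀ t ∈ F, s ≠ t → Disjoint s.verts t.verts) ∧
  ∀ v : V, ∃ s ∈ F, v ∈ s.verts

/-- All edges used by a set of 5-stars. -/
def factorEdges {V : Type*} [DecidableEq V] (F : Finset (Star5 V)) : Finset (Sym2 V) :=
  F.biUnion Star5.edges

/-- A perfect matching of the complete graph on `V`, given as a set of edges:
every edge is a genuine edge and every vertex lies in exactly one edge. -/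
def IsPerfectMatchingK {V : Type*} (M : Finset (Sym2 V)) : Prop :=
  (∀ e ∈ M, ¬ e.IsDiag) ∧ ∀ v : V, ∃! e, e ∈ M ∧ v ∈ e

/-- `K_v − I` admits a decomposition into `k` 5-star factors: there is a perfect
matching `I = M` of `K_v` and `k` 5-star factors whose edge sets partition the
edges of `K_v` not in `M`. -/
def HasStarDecompInto (v k : ℕ) : Prop :=
  ∃ (M : Finset (Sym2 (Fin v))) (F : Fin k → Finset (Star5 (Fin v))),
    IsPerfectMatchingK M ∧
    (∀ i, IsStar5Factor (F i)) ∧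
    (∀ i, Disjoint (factorEdges (F i)) M) ∧
    ∀ e : Sym2 (Fin v), ¬ e.IsDiag → e ∉ M → ∃! i, e ∈ factorEdges (F i)

/-- `K_v − I` admits a decomposition into 5-star factors. -/
def HasStarDecomp (v : ℕ) : Prop := ∃ k, HasStarDecompInto v k

section Aux
variable {V : Type*} [DecidableEq V]

lemma verts_card (s : Star5 V) : s.verts.card = 6 := by
  rw [Star5.verts, Finset.card_insert_of_notMem s.center_not_leaf, s.card_leaves]

lemma edges_card (s : Star5 V) : s.edges.card = 5 := by
  rw [Star5.edges, Finset.card_image_of_injOn, s.card_leaves]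
  intro l1 h1 l2 h2 h
  rw [Sym2.eq_iff] at h
  rcases h with ⟨-, rfl⟩ | ⟨rfl, rfl⟩
  · rfl
  · exact absurd h1 s.center_not_leaf

lemma mem_verts_of_mem_edges (s : Star5 V) {e : Sym2 V} (he : e ∈ s.edges)
    {x : V} (hx : x ∈ e) : x ∈ s.verts := by
  rw [Star5.edges, Finset.mem_image] at he
  obtain ⟨l, hl, rfl⟩ := he
  rw [Sym2.mem_iff] at hx
  rcases hx with rfl | rfl
  · exact Finset.mem_insert_self _ _
  · exact Finset.mem_insert_of_mem hl

lemma center_mem_edge (s : Star5 V) {e : Sym2 V} (he : e ∈ s.edges) : s.center ∈ e := by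
  rw [Star5.edges, Finset.mem_image] at he
  obtain ⟨l, hl, rfl⟩ := he
  exact Sym2.mem_mk_left _ _

lemma edge_not_diag (s : Star5 V) {e : Sym2 V} (he : e ∈ s.edges) : ¬ e.IsDiag := by
  rw [Star5.edges, Finset.mem_image] at he
  obtain ⟨l, hl, rfl⟩ := he
  rw [Sym2.mk_isDiag_iff]
  rintro rfl
  exact s.center_not_leaf hl

variable [Fintype V]

lemma factor_card {F : Finset (Star5 V)} (hF : IsStar5Factor F) :
    6 * F.card = Fintype.card V := by
  have huniv : (Finset.univ : Finset V) = F.biUnion Star5.verts := by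
    ext x
    simp only [Finset.mem_univ, Finset.mem_biUnion, true_iff]
    exact hF.2 x
  have := Finset.card_biUnion (fun s hs t ht hst => hF.1 s hs t ht hst)
  rw [← Finset.card_univ, huniv, this]
  rw [Finset.sum_congr rfl (fun s _ => verts_card s), Finset.sum_const, smul_eq_mul, mul_comm]

lemma factorEdges_card {F : Finset (Star5 V)} (hF : IsStar5Factor F) :
    (factorEdges F).card = 5 * F.card := by
  rw [factorEdges, Finset.card_biUnion, Finset.sum_congr rfl (fun s _ => edges_card s),
    Finset.sum_const, smul_eq_mul, mul_comm]
  intro s hs t ht hst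
  rw [Function.onFun, Finset.disjoint_left]
  intro e hes het
  exact (Finset.disjoint_left.1 (hF.1 s hs t ht hst)
    (mem_verts_of_mem_edges s hes (center_mem_edge s hes)))
    (mem_verts_of_mem_edges t het (center_mem_edge s hes))

lemma matching_card {M : Finset (Sym2 V)} (hM : IsPerfectMatchingK M) :
    2 * M.card = Fintype.card V := by
  have huniv : (Finset.univ : Finset V) = M.biUnion
      (fun e => Finset.univ.filter (· ∈ e)) := by
    ext x
    simp only [Finset.mem_univ, Finset.mem_biUnion, Finset.mem_filter, true_iff, true_and]
    obtain ⟨e, he, -⟩ := hM.2 x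
    exact ⟨e, he.1, he.2⟩
  have hdisj : ∀ e1 ∈ M, ∀ e2 ∈ M, e1 ≠ e2 →
      Disjoint (Finset.univ.filter (· ∈ e1)) (Finset.univ.filter (· ∈ e2)) := by
    intro e1 h1 e2 h2 hne
    rw [Finset.disjoint_left]
    intro x hx1 hx2
    simp only [Finset.mem_filter] at hx1 hx2
    obtain ⟨e, -, hu⟩ := hM.2 x
    exact hne ((hu e1 ⟨h1, hx1.2⟩).trans (hu e2 ⟨h2, hx2.2⟩).symm)
  rw [← Finset.card_univ, huniv, Finset.card_biUnion hdisj]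
  have hcard : ∀ e ∈ M, (Finset.univ.filter (· ∈ e)).card = 2 := by
    intro e he
    induction e using Sym2.ind with
    | _ a b =>
      have hab : a ≠ b := by
        intro h; exact hM.1 _ he (by rw [Sym2.mk_isDiag_iff]; exact h)
      have : Finset.univ.filter (· ∈ s(a, b)) = {a, b} := by
        ext x
        simp [Sym2.mem_iff]
      rw [this, Finset.card_insert_of_notMem (by simpa using hab), Finset.card_singleton]
  rw [Finset.sum_congr rfl hcard, Finset.sum_const, smul_eq_mul, mul_comm]
end Aux

lemma mem_factorEdges {V : Type*} [DecidableEq V] {F : Finset (Star5 V)} {e : Sym2 V} :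
    e ∈ factorEdges F ↔ ∃ s ∈ F, e ∈ s.edges := Finset.mem_biUnion

theorem star5_decomposition_necessary :
    ∀ v : ℕ, 2 < v → HasStarDecomp v → v % 30 = 12 := by
  intro v hv ⟨k, M, F, hM, hF, hdisjM, hcover⟩
  have hv6 : ∀ i, 6 * (F i).card = v := fun i => by
    simpa [Fintype.card_fin] using factor_card (hF i)
  have hM2 : 2 * M.card = v := by simpa [Fintype.card_fin] using matching_card hM
  set E : Finset (Sym2 (Fin v)) := Finset.univ.filter (fun e => ¬ e.IsDiag) with hE
  have hEcard : E.card = v.choose 2 := by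
    rw [hE, ← Fintype.card_subtype]
    simpa [Fintype.card_fin] using Sym2.card_subtype_not_diag (α := Fin v)
  have hMsubE : M ⊆ E := fun e he => by
    simp only [hE, Finset.mem_filter, Finset.mem_univ, true_and]
    exact hM.1 e he
  have hpart : E \ M = Finset.univ.biUnion (fun i : Fin k => factorEdges (F i)) := by
    ext e
    rw [Finset.mem_sdiff, Finset.mem_biUnion, hE, Finset.mem_filter]
    constructor
    · rintro ⟨⟨-, hnd⟩, hnM⟩
      obtain ⟨i, hi, -⟩ := hcover e hnd hnM
      exact ⟨i, Finset.mem_univ _, hi⟩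
    · rintro ⟨i, -, hi⟩
      obtain ⟨s, hs, hes⟩ := mem_factorEdges.1 hi
      exact ⟨⟨Finset.mem_univ _, edge_not_diag s hes⟩,
        fun heM => (Finset.disjoint_left.1 (hdisjM i)) hi heM⟩
  have hdisjF : ∀ i ∈ (Finset.univ : Finset (Fin k)), ∀ j ∈ (Finset.univ : Finset (Fin k)),
      i ≠ j → Disjoint (factorEdges (F i)) (factorEdges (F j)) := by
    intro i _ j _ hij
    rw [Finset.disjoint_left]
    intro e hei hej
    obtain ⟨s, hs, hes⟩ := mem_factorEdges.1 hei
    have hnd : ¬ e.IsDiag := edge_not_diag s hes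
    have hnM : e ∉ M := fun heM => (Finset.disjoint_left.1 (hdisjM i)) hei heM
    obtain ⟨i', -, hu⟩ := hcover e hnd hnM
    exact hij ((hu i hei).trans (hu j hej).symm)
  have hcount : (E \ M).card = k * (5 * (v / 6)) := by
    rw [hpart, Finset.card_biUnion hdisjF]
    have h1 : ∀ i ∈ (Finset.univ : Finset (Fin k)),
        (factorEdges (F i)).card = 5 * (v / 6) := by
      intro i _
      rw [factorEdges_card (hF i)]
      have := hv6 i
      congr 1
      omega
    rw [Finset.sum_congr rfl h1, Finset.sum_const, Finset.card_univ, Fintype.card_fin,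
      smul_eq_mul]
  -- the identity 2 * choose v 2 = v * (v - 1)
  obtain ⟨w, rfl⟩ : ∃ w, v = w + 3 := ⟨v - 3, by omega⟩
  have h2c : 2 * (w + 3).choose 2 = (w + 3) * (w + 2) := by
    rw [Nat.choose_two_right]
    have h1 : (w + 3) * (w + 3 - 1) = (w + 3) * (w + 2) := by norm_num
    rw [h1]
    have he : Even ((w + 3) * (w + 2)) := by
      have h := Nat.even_mul_succ_self (w + 2)
      rwa [mul_comm] at h
    obtain ⟨r, hr⟩ := he
    omega
  have hsd : (E \ M).card = (w + 3).choose 2 - M.card := by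
    rw [Finset.card_sdiff_of_subset hMsubE, hEcard]
  have hale : M.card ≤ (w + 3).choose 2 := hEcard ▸ Finset.card_le_card hMsubE
  -- k is positive
  have hk : k ≠ 0 := by
    rintro rfl
    rw [hcount] at hsd
    have hd : 2 * (w + 3) ≤ (w + 3) * (w + 2) :=
      mul_comm 2 (w + 3) ▸ Nat.mul_le_mul_left (w + 3) (by omega)
    omega
  -- v = 6 * m
  set m := (F ⟨0, Nat.pos_of_ne_zero hk⟩).card with hmdef
  have hm : 6 * m = w + 3 := hv6 _
  have hm1 : 1 ≤ m := by omega
  have hdiv : (w + 3) / 6 = m := by omega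
  rw [hdiv] at hcount
  have hceq : (w + 3).choose 2 = M.card + k * (5 * m) := by
    rw [hcount] at hsd
    omega
  -- pass to the integers and cancel m
  have hZ : (10 * (k : ℤ)) * (m : ℤ) = (36 * (m : ℤ) - 12) * (m : ℤ) := by
    have e2c : 2 * (((w + 3).choose 2 : ℕ) : ℤ) = ((w : ℤ) + 3) * ((w : ℤ) + 2) := by
      exact_mod_cast h2c
    have eceq : (((w + 3).choose 2 : ℕ) : ℤ) = (M.card : ℤ) + (k : ℤ) * (5 * (m : ℤ)) := by
      exact_mod_cast hceq
    have ea : 2 * (M.card : ℤ) = (w : ℤ) + 3 := by exact_mod_cast hM2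
    have em : 6 * (m : ℤ) = (w : ℤ) + 3 := by exact_mod_cast hm
    linear_combination e2c - 2 * eceq - ea - (6 * (m : ℤ) + (w : ℤ) + 1) * em
  have hmZ : (m : ℤ) ≠ 0 := by exact_mod_cast (by omega : m ≠ 0)
  have h10 : (10 * (k : ℤ)) = 36 * (m : ℤ) - 12 := mul_right_cancel₀ hmZ hZ
  have h10' : 10 * k + 12 = 36 * m := by
    have h : (10 * (k : ℤ)) + 12 = 36 * (m : ℤ) := by linarith
    exact_mod_cast h
  omega
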